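/- Let q ≥ 11 be an integer, n = 2(q^2-1), and let d be an integer with 5 ≤ d ≤ 3q/2. Then q^{3d-1} < ((2(q^2-1)^2)/(d-1))^{d-1}, and consequently q^{3d-1} < (q^2-1)^{d-1} · binom(n, d-1). -/

import Mathlib

/-- `k^4 ≤ 14 * (49/20)^k` for `k ≥ 7`. -/
lemma pow4_le' : ∀ k : ℕ, 7 ≤ k → (k : ℝ) ^ 4 ≤ 14 * (49 / 20) ^ k := by
  intro k hk
  induction k, hk using Nat.le_induction with
  | base => norm_num
  | succ k hk ih =>
    have hk0 : (7 : ℝ) ≤ (k : ℝ) := by exact_mod_cast hk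
    have h8 : ((k : ℝ) + 1) ≤ (8 / 7) * k := by linarith
    have h2 : (((k : ℕ) + 1 : ℕ) : ℝ) ^ 4 ≤ (49 / 20) * (k : ℝ) ^ 4 := by
      push_cast
      calc ((k : ℝ) + 1) ^ 4 ≤ ((8 / 7) * k) ^ 4 := by
            apply pow_le_pow_left₀ (by linarith) h8
        _ = (8 / 7 : ℝ) ^ 4 * (k : ℝ) ^ 4 := by ring
        _ ≤ (49 / 20) * (k : ℝ) ^ 4 := by nlinarith [pow_nonneg (by linarith : (0:ℝ) ≤ (k:ℝ)) 4]
    calc (((k : ℕ) + 1 : ℕ) : ℝ) ^ 4 ≤ (49 / 20) * (k : ℝ) ^ 4 := h2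
      _ ≤ (49 / 20) * (14 * (49 / 20) ^ k) := by nlinarith
      _ = 14 * (49 / 20) ^ (k + 1) := by ring



/-- `q^10 * 3^(4q) < 4^(4q)` for `q ≥ 31`. -/
lemma top_pow' : ∀ q : ℕ, 31 ≤ q → q ^ 10 * 3 ^ (4 * q) < 4 ^ (4 * q) := by
  intro q hq
  induction q, hq using Nat.le_induction with
  | base => norm_num
  | succ q hq ih =>
    have h31 : 31 * (q + 1) ≤ 32 * q := by omega
    have h1 : 31 ^ 10 * (q + 1) ^ 10 ≤ 32 ^ 10 * q ^ 10 := by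
      calc 31 ^ 10 * (q + 1) ^ 10 = (31 * (q + 1)) ^ 10 := (mul_pow _ _ _).symm
        _ ≤ (32 * q) ^ 10 := Nat.pow_le_pow_left h31 _
        _ = 32 ^ 10 * q ^ 10 := mul_pow _ _ _
    have h2 : (q + 1) ^ 10 * 81 ≤ 256 * q ^ 10 := by
      have h3 : 31 ^ 10 * ((q + 1) ^ 10 * 81) ≤ 31 ^ 10 * (256 * q ^ 10) := by
        calc 31 ^ 10 * ((q + 1) ^ 10 * 81) = 81 * (31 ^ 10 * (q + 1) ^ 10) := by ring
          _ ≤ 81 * (32 ^ 10 * q ^ 10) := Nat.mul_le_mul_left _ h1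
          _ ≤ 31 ^ 10 * (256 * q ^ 10) := by
              have : 81 * 32 ^ 10 ≤ 256 * 31 ^ 10 := by norm_num
              calc 81 * (32 ^ 10 * q ^ 10) = (81 * 32 ^ 10) * q ^ 10 := by ring
                _ ≤ (256 * 31 ^ 10) * q ^ 10 := Nat.mul_le_mul_right _ this
                _ = 31 ^ 10 * (256 * q ^ 10) := by ring
      exact Nat.le_of_mul_le_mul_left h3 (by positivity)
    calc (q + 1) ^ 10 * 3 ^ (4 * (q + 1)) = ((q + 1) ^ 10 * 81) * 3 ^ (4 * q) := by
          rw [show 4 * (q + 1) = 4 * q + 4 by ring, pow_add]; ring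
      _ ≤ (256 * q ^ 10) * 3 ^ (4 * q) := Nat.mul_le_mul_right _ h2
      _ = 256 * (q ^ 10 * 3 ^ (4 * q)) := by ring
      _ < 256 * 4 ^ (4 * q) := by
          exact Nat.mul_lt_mul_of_le_of_lt (le_refl 256) ih (by norm_num)
      _ = 4 ^ (4 * (q + 1)) := by
          rw [show 4 * (q + 1) = 4 * q + 4 by ring, pow_add]; ring

/-- In case `5k > 4q`, `q ≥ 31`: `3^k * q^2 < 4^k`. -/
lemma top_bridge' (q k : ℕ) (hq : 31 ≤ q) (hk : 4 * q < 5 * k) :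
    3 ^ k * q ^ 2 < 4 ^ k := by
  have h1 : q ^ 10 * 3 ^ (4 * q) < 4 ^ (4 * q) := top_pow' q hq
  have h5 : q ^ 10 * 3 ^ (5 * k) < 4 ^ (5 * k) := by
    have hle : 4 * q ≤ 5 * k := le_of_lt hk
    obtain ⟨j, hj⟩ : ∃ j, 5 * k = 4 * q + j := ⟨5 * k - 4 * q, by omega⟩
    rw [hj, pow_add, pow_add]
    calc q ^ 10 * (3 ^ (4 * q) * 3 ^ j) = (q ^ 10 * 3 ^ (4 * q)) * 3 ^ j := by ring
      _ < 4 ^ (4 * q) * 3 ^ j := by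
          exact Nat.mul_lt_mul_of_lt_of_le h1 (le_refl _) (by positivity)
      _ ≤ 4 ^ (4 * q) * 4 ^ j := Nat.mul_le_mul_left _ (Nat.pow_le_pow_left (by norm_num) _)
  by_contra hcon
  push_neg at hcon
  have : (4 ^ k) ^ 5 ≤ (3 ^ k * q ^ 2) ^ 5 := Nat.pow_le_pow_left hcon 5
  have heq : (3 ^ k * q ^ 2) ^ 5 = q ^ 10 * 3 ^ (5 * k) := by
    rw [mul_pow, ← pow_mul, ← pow_mul]; ring
  have heq2 : (4 ^ k) ^ 5 = 4 ^ (5 * k) := by rw [← pow_mul]; ring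
  omega



set_option maxHeartbeats 4000000 in
lemma brute' (q k : ℕ) (hq : 11 ≤ q) (hq30 : q ≤ 30) (hkq : 2 * k + 2 ≤ 3 * q)
    (hB : 4 * q < 5 * k) :
    ((k : ℝ)) ^ k * (q : ℝ) ^ (3 * k + 2) < 2 ^ k * ((q : ℝ) ^ 2 - 1) ^ (2 * k) := by
  have hub : k ≤ 44 := by omega
  have hlb : 9 ≤ k := by omega
  interval_cases q <;> interval_cases k <;>
    first
      | (exfalso; omega)
      | norm_num

set_option maxHeartbeats 1600000 in
lemma master_ineq (q k : ℕ) (hq : 11 ≤ q) (hk : 4 ≤ k) (hkq : 2 * k + 2 ≤ 3 * q) :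
    ((k : ℝ)) ^ k * (q : ℝ) ^ (3 * k + 2) < 2 ^ k * ((q : ℝ) ^ 2 - 1) ^ (2 * k) := by
  have hk0 : k ≠ 0 := by omega
  have hQ : (11 : ℝ) ≤ (q : ℝ) := by exact_mod_cast hq
  have hK : (4 : ℝ) ≤ (k : ℝ) := by exact_mod_cast hk
  have hQ0 : (0 : ℝ) < q := by linarith
  have hK0 : (0 : ℝ) < k := by linarith
  have h1Q : (1 : ℝ) ≤ q := by linarith
  have hq1 : (0 : ℝ) < (q:ℝ)^2 - 1 := by nlinarith
  have hq2 : (0 : ℝ) < (q:ℝ)^2 - 2 := by nlinarith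
  have hq4 : (0 : ℝ) < (q:ℝ)^2 - 4 := by nlinarith
  have hS1 : (q:ℝ)^(2*k) * ((q:ℝ)^2 - 2) ^ k ≤ ((q:ℝ)^2 - 1) ^ (2 * k) := by
    have h := pow_le_pow_left₀ (show (0:ℝ) ≤ (q:ℝ)^2*((q:ℝ)^2-2) by positivity)
      (show (q:ℝ)^2*((q:ℝ)^2-2) ≤ ((q:ℝ)^2-1)^2 by nlinarith) k
    rw [mul_pow, ← pow_mul, ← pow_mul] at h
    exact h
  by_cases hA : 5 * k^2 ≤ 19 * q
  · -- CASE A : small k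
    have hK2 : (k:ℝ)^2 ≤ 19*(q:ℝ)/5 := by
      have h5 : (5:ℝ) * (k:ℝ)^2 ≤ 19 * (q:ℝ) := by exact_mod_cast hA
      linarith
    have hb0 : (0:ℝ) < 2 ^ k * ((q:ℝ)^2-1)^(2*k) := by positivity
    refine lt_of_pow_lt_pow_left₀ 2 hb0.le ?_
    have hS2 : (q:ℝ)^(6*k) * ((q:ℝ)^2-4)^k ≤ ((q:ℝ)^2-1)^(4*k) := by
      have h := pow_le_pow_left₀ (show (0:ℝ) ≤ (q:ℝ)^6*((q:ℝ)^2-4) by positivity)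
        (show (q:ℝ)^6*((q:ℝ)^2-4) ≤ ((q:ℝ)^2-1)^4 by nlinarith) k
      rw [mul_pow, ← pow_mul, ← pow_mul] at h
      exact h
    have c2 : (19*(q:ℝ)/5)^k * (q:ℝ)^4 < 2^k * 2^k * ((q:ℝ)^2-4)^k := by
      have key2 : (2340/2299:ℝ)*(19*(q:ℝ)/5)*(q:ℝ) ≤ 2*2*((q:ℝ)^2-4) := by nlinarith
      have h := pow_le_pow_left₀ (show (0:ℝ) ≤ (2340/2299:ℝ)*(19*(q:ℝ)/5)*(q:ℝ) by positivity)
        key2 k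
      simp only [mul_pow] at h
      calc (19*(q:ℝ)/5)^k * (q:ℝ)^4
          ≤ (19*(q:ℝ)/5)^k * (q:ℝ)^k :=
            mul_le_mul_of_nonneg_left (pow_le_pow_right₀ h1Q hk) (by positivity)
        _ < (2340/2299:ℝ)^k * ((19*(q:ℝ)/5)^k * (q:ℝ)^k) := by
            nlinarith [mul_pos (pow_pos (show (0:ℝ) < 19*(q:ℝ)/5 by positivity) k)
              (pow_pos hQ0 k), one_lt_pow₀ (show (1:ℝ) < 2340/2299 by norm_num) hk0]
        _ = (2340/2299:ℝ)^k * (19*(q:ℝ)/5)^k * (q:ℝ)^k := by ring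
        _ ≤ 2^k * 2^k * ((q:ℝ)^2-4)^k := h
    calc ((k:ℝ)^k * (q:ℝ)^(3*k+2))^2
        = ((k:ℝ)^2)^k * ((q:ℝ)^(6*k) * (q:ℝ)^4) := by ring
      _ ≤ (19*(q:ℝ)/5)^k * ((q:ℝ)^(6*k) * (q:ℝ)^4) :=
          mul_le_mul_of_nonneg_right (pow_le_pow_left₀ (by positivity) hK2 k) (by positivity)
      _ = ((19*(q:ℝ)/5)^k * (q:ℝ)^4) * (q:ℝ)^(6*k) := by ring
      _ < (2^k * 2^k * ((q:ℝ)^2-4)^k) * (q:ℝ)^(6*k) :=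
          mul_lt_mul_of_pos_right c2 (by positivity)
      _ = ((q:ℝ)^(6*k) * ((q:ℝ)^2-4)^k) * (2^k)^2 := by ring
      _ ≤ ((q:ℝ)^2-1)^(4*k) * (2^k)^2 :=
          mul_le_mul_of_nonneg_right hS2 (by positivity)
      _ = (2^k * ((q:ℝ)^2-1)^(2*k))^2 := by
          rw [mul_pow, ← pow_mul, ← pow_mul]
          ring
  · push_neg at hA
    by_cases hB : 5 * k ≤ 4 * q
    · -- CASE B : middle k
      have hk7 : 7 ≤ k := by
        by_contra h
        push_neg at h
        interval_cases k <;> omega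
      have hB' : (k:ℝ) ≤ 4*(q:ℝ)/5 := by
        have h5 : (5:ℝ) * (k:ℝ) ≤ 4 * (q:ℝ) := by exact_mod_cast hB
        linarith
      have h4920 : (q:ℝ)^2 < (49/20:ℝ)^k := by
        have hp := pow4_le' k hk7
        have h19 : 19*(q:ℝ) < 5*(k:ℝ)^2 := by exact_mod_cast hA
        nlinarith
      have key : (49/20:ℝ)*(4*(q:ℝ)^2/5) ≤ 2*((q:ℝ)^2-2) := by nlinarith
      have c1 : (4*(q:ℝ)^2/5)^k * (q:ℝ)^2 < 2^k * ((q:ℝ)^2-2)^k := by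
        have h := pow_le_pow_left₀ (show (0:ℝ) ≤ (49/20:ℝ)*(4*(q:ℝ)^2/5) by positivity)
          key k
        simp only [mul_pow] at h
        calc (4*(q:ℝ)^2/5)^k * (q:ℝ)^2
            < (4*(q:ℝ)^2/5)^k * (49/20:ℝ)^k :=
              mul_lt_mul_of_pos_left h4920 (by positivity)
          _ = (49/20:ℝ)^k * (4*(q:ℝ)^2/5)^k := by ring
          _ ≤ 2^k * ((q:ℝ)^2-2)^k := h
      calc (k:ℝ)^k * (q:ℝ)^(3*k+2)
          ≤ (4*(q:ℝ)/5)^k * (q:ℝ)^(3*k+2) :=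
            mul_le_mul_of_nonneg_right (pow_le_pow_left₀ hK0.le hB' k) (by positivity)
        _ = ((4*(q:ℝ)^2/5)^k * (q:ℝ)^2) * (q:ℝ)^(2*k) := by
            ring
        _ < (2^k * ((q:ℝ)^2-2)^k) * (q:ℝ)^(2*k) :=
            mul_lt_mul_of_pos_right c1 (by positivity)
        _ = 2^k * ((q:ℝ)^(2*k) * ((q:ℝ)^2-2)^k) := by ring
        _ ≤ 2^k * ((q:ℝ)^2-1)^(2*k) :=
            mul_le_mul_of_nonneg_left hS1 (by positivity)
    · -- CASE C : large k
      push_neg at hB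
      by_cases hq30 : q ≤ 30
      · exact brute' q k hq hq30 hkq hB
      · have hq31 : 31 ≤ q := by omega
        have hbridge : (3:ℝ)^k * (q:ℝ)^2 < 4^k := by exact_mod_cast top_bridge' q k hq31 hB
        have h43 : (q:ℝ)^2 < (4/3:ℝ)^k := by
          rw [div_pow, lt_div_iff₀ (by positivity)]
          calc (q:ℝ)^2 * 3^k = 3^k * (q:ℝ)^2 := by ring
            _ < 4^k := hbridge
        have h32 : 2*(k:ℝ) + 2 ≤ 3*(q:ℝ) := by exact_mod_cast hkq
        have hKle : (k:ℝ) ≤ (3*(q:ℝ)-2)/2 := by linarith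
        have h3q2 : (0:ℝ) < 3*(q:ℝ)-2 := by linarith
        have key1 : (4/3:ℝ)*((3*(q:ℝ)-2)*(q:ℝ)) ≤ 2*2*((q:ℝ)^2-2) := by
          have h8 : (8:ℝ) ≤ (8/3)*(q:ℝ) := by linarith
          ring_nf
          ring_nf at h8
          linarith
        have c1 : ((3*(q:ℝ)-2)^k * (q:ℝ)^k) * (q:ℝ)^2 < 2^k * 2^k * ((q:ℝ)^2-2)^k := by
          have hbpos : (0:ℝ) < (3*(q:ℝ)-2)*(q:ℝ) := mul_pos h3q2 hQ0
          have h := pow_le_pow_left₀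
            (mul_pos (show (0:ℝ) < 4/3 by norm_num) hbpos).le key1 k
          simp only [mul_pow] at h
          calc ((3*(q:ℝ)-2)^k * (q:ℝ)^k) * (q:ℝ)^2
              < ((3*(q:ℝ)-2)^k * (q:ℝ)^k) * (4/3:ℝ)^k :=
                mul_lt_mul_of_pos_left h43 (mul_pos (pow_pos h3q2 k) (pow_pos hQ0 k))
            _ = (4/3:ℝ)^k * ((3*(q:ℝ)-2)^k * (q:ℝ)^k) := by ring
            _ ≤ 2^k * 2^k * ((q:ℝ)^2-2)^k := h
        have step : ((3*(q:ℝ)-2)/2)^k * (q:ℝ)^(3*k+2) < 2^k * ((q:ℝ)^2-1)^(2*k) := by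
          rw [div_pow, div_mul_eq_mul_div, div_lt_iff₀ (by positivity : (0:ℝ) < 2^k)]
          calc (3*(q:ℝ)-2)^k * (q:ℝ)^(3*k+2)
              = (((3*(q:ℝ)-2)^k * (q:ℝ)^k) * (q:ℝ)^2) * (q:ℝ)^(2*k) := by
                ring
            _ < (2^k * 2^k * ((q:ℝ)^2-2)^k) * (q:ℝ)^(2*k) :=
                mul_lt_mul_of_pos_right c1 (by positivity)
            _ = 2^k * ((q:ℝ)^(2*k) * ((q:ℝ)^2-2)^k) * 2^k := by ring
            _ ≤ 2^k * ((q:ℝ)^2-1)^(2*k) * 2^k := by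
                have := mul_le_mul_of_nonneg_left hS1 (show (0:ℝ) ≤ 2^k by positivity)
                exact mul_le_mul_of_nonneg_right this (by positivity)
        calc (k:ℝ)^k * (q:ℝ)^(3*k+2)
            ≤ ((3*(q:ℝ)-2)/2)^k * (q:ℝ)^(3*k+2) :=
              mul_le_mul_of_nonneg_right (pow_le_pow_left₀ hK0.le hKle k) (by positivity)
          _ < 2^k * ((q:ℝ)^2-1)^(2*k) := step


/-- Lower bound `n^k ≤ k^k * C(n,k)`, i.e. `(n/k)^k ≤ C(n,k)`. -/
lemma choose_lower' : ∀ (k n : ℕ), k ≤ n → n ^ k ≤ k ^ k * n.choose k := by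
  intro k
  induction k with
  | zero => intro n _; simp
  | succ k ih =>
    intro n hn
    obtain ⟨m, rfl⟩ : ∃ m, n = m + 1 := ⟨n - 1, by omega⟩
    have hkm : k ≤ m := by omega
    have h1 : m ^ k ≤ k ^ k * m.choose k := ih m hkm
    have hkk : 0 < k ^ k := by
      rcases Nat.eq_zero_or_pos k with h | h
      · simp [h]
      · exact Nat.pow_pos h
    have key : (m + 1) ^ k * k ^ k ≤ (k + 1) ^ k * m ^ k := by
      calc (m + 1) ^ k * k ^ k = ((m + 1) * k) ^ k := (mul_pow _ _ _).symm
        _ ≤ ((k + 1) * m) ^ k := Nat.pow_le_pow_left (by nlinarith) _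
        _ = (k + 1) ^ k * m ^ k := mul_pow _ _ _
    have hc : (m + 1) * m.choose k = (m + 1).choose (k + 1) * (k + 1) :=
      Nat.add_one_mul_choose_eq m k
    have hmain : (m + 1) ^ (k + 1) * k ^ k
        ≤ (k + 1) ^ (k + 1) * (m + 1).choose (k + 1) * k ^ k := by
      calc (m + 1) ^ (k + 1) * k ^ k = (m + 1) * ((m + 1) ^ k * k ^ k) := by ring
        _ ≤ (m + 1) * ((k + 1) ^ k * m ^ k) := Nat.mul_le_mul_left _ key
        _ ≤ (m + 1) * ((k + 1) ^ k * (k ^ k * m.choose k)) :=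
            Nat.mul_le_mul_left _ (Nat.mul_le_mul_left _ h1)
        _ = (k + 1) ^ k * k ^ k * ((m + 1) * m.choose k) := by ring
        _ = (k + 1) ^ k * k ^ k * ((m + 1).choose (k + 1) * (k + 1)) := by rw [hc]
        _ = (k + 1) ^ (k + 1) * (m + 1).choose (k + 1) * k ^ k := by ring
    exact Nat.le_of_mul_le_mul_right hmain hkk

/-- For integer `q ≥ 11`, `n = 2(q²-1)` and integer `5 ≤ d ≤ 3q/2`:
`q^{3d-1} < (2(q²-1)²/(d-1))^{d-1}` and hence
`q^{3d-1} < (q²-1)^{d-1}·C(n, d-1)`. -/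
theorem stmt9 (q d : ℕ) (hq : 11 ≤ q) (hd1 : 5 ≤ d) (hd2 : 2 * d ≤ 3 * q) :
    (q : ℝ) ^ (3 * d - 1)
        < ((2 * ((q : ℝ) ^ 2 - 1) ^ 2) / ((d : ℝ) - 1)) ^ (d - 1) ∧
    (q : ℝ) ^ (3 * d - 1)
        < ((q : ℝ) ^ 2 - 1) ^ (d - 1) * ((2 * (q ^ 2 - 1)).choose (d - 1) : ℝ) := by
  obtain ⟨k, rfl⟩ : ∃ k, d = k + 1 := ⟨d - 1, by omega⟩
  have hk : 4 ≤ k := by omega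
  have hkq : 2 * k + 2 ≤ 3 * q := by omega
  have hM := master_ineq q k hq hk hkq
  have hQ : (11 : ℝ) ≤ (q : ℝ) := by exact_mod_cast hq
  have hq1 : (0 : ℝ) < (q : ℝ) ^ 2 - 1 := by nlinarith
  have hK0 : (0 : ℝ) < (k : ℝ) := by
    have : (4 : ℝ) ≤ (k : ℝ) := by exact_mod_cast hk
    linarith
  have he : 3 * (k + 1) - 1 = 3 * k + 2 := by omega
  have hd' : (k + 1 : ℕ) - 1 = k := by omega
  rw [he, hd']
  have hc : ((k + 1 : ℕ) : ℝ) - 1 = (k : ℝ) := by push_cast; ring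
  have hM' : (q : ℝ) ^ (3 * k + 2) * (k : ℝ) ^ k < 2 ^ k * ((q : ℝ) ^ 2 - 1) ^ (2 * k) := by
    calc (q : ℝ) ^ (3 * k + 2) * (k : ℝ) ^ k
        = (k : ℝ) ^ k * (q : ℝ) ^ (3 * k + 2) := by ring
      _ < 2 ^ k * ((q : ℝ) ^ 2 - 1) ^ (2 * k) := hM
  constructor
  · rw [hc, div_pow, lt_div_iff₀ (pow_pos hK0 k)]
    calc (q : ℝ) ^ (3 * k + 2) * (k : ℝ) ^ k
        < 2 ^ k * ((q : ℝ) ^ 2 - 1) ^ (2 * k) := hM'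
      _ = (2 * ((q : ℝ) ^ 2 - 1) ^ 2) ^ k := by
          rw [mul_pow, ← pow_mul] <;> ring
  · have h1q2 : 1 ≤ q ^ 2 := by nlinarith
    set n : ℕ := 2 * (q ^ 2 - 1) with hn
    have hkn : k ≤ n := by
      have h121 : 121 ≤ q ^ 2 := by nlinarith
      have h3q : 3 * q ≤ q ^ 2 := by nlinarith
      obtain ⟨s, hs⟩ : ∃ s, s = q ^ 2 := ⟨_, rfl⟩
      rw [← hs] at h121 h3q hn
      omega
    have hch : ((n : ℕ) : ℝ) ^ k ≤ (k : ℝ) ^ k * ((n.choose k : ℕ) : ℝ) := by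
      exact_mod_cast choose_lower' k n hkn
    have hncast : ((n : ℕ) : ℝ) = 2 * ((q : ℝ) ^ 2 - 1) := by
      rw [hn]
      push_cast [h1q2]
      ring
    rw [hncast] at hch
    have hfin : (q : ℝ) ^ (3 * k + 2) * (k : ℝ) ^ k
        < (((q : ℝ) ^ 2 - 1) ^ k * ((n.choose k : ℕ) : ℝ)) * (k : ℝ) ^ k := by
      calc (q : ℝ) ^ (3 * k + 2) * (k : ℝ) ^ k
          < 2 ^ k * ((q : ℝ) ^ 2 - 1) ^ (2 * k) := hM'
        _ = ((q : ℝ) ^ 2 - 1) ^ k * (2 * ((q : ℝ) ^ 2 - 1)) ^ k := by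
            rw [mul_pow]
            ring
        _ ≤ ((q : ℝ) ^ 2 - 1) ^ k * ((k : ℝ) ^ k * ((n.choose k : ℕ) : ℝ)) :=
            mul_le_mul_of_nonneg_left hch (by positivity)
        _ = (((q : ℝ) ^ 2 - 1) ^ k * ((n.choose k : ℕ) : ℝ)) * (k : ℝ) ^ k := by ring
    exact lt_of_mul_lt_mul_right (by exact hfin) (pow_pos hK0 k).le
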